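/- Let X be a finite nonempty set and ε > 0. If θ and θ' are partial dendrograms over X such that neither θ(∞) nor θ'(∞) is the one-block partition {X} (as is the case for all partial dendrograms arising over a strict poset with nonempty order relation), then U_ε(θ) = U_ε(θ') implies θ = θ'. In other words, the ultrametric completion U_ε is injective on such partial dendrograms for every ε > 0. -/

import Mathlib

open scoped NNReal
open Classical

/-- The diameter of a partial dendrogram `θ`: the least `t` at which `θ`
attains its greatest partition `θ(∞) = ⨆ t', θ t'`. -/
noncomputable def diamPD {X : Type*} (θ : ℝ≥0 → Setoid X) : ℝ≥0 :=
  sInf {t : ℝ≥0 | θ t = ⨆ t', θ t'}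

/-- The ultrametric completion `U_ε(θ)`: the merge height of `x` and `y` if they
end up in one block of `θ(∞)`, and `diam θ + ε` otherwise. -/
noncomputable def Ueps {X : Type*} (θ : ℝ≥0 → Setoid X) (ε : ℝ≥0) (x y : X) : ℝ≥0 :=
  if (⨆ t, θ t) x y then sInf {t : ℝ≥0 | (θ t) x y} else diamPD θ + ε

section Aux

variable {X : Type*} [Finite X]

private instance : Finite (Setoid X) :=
  Finite.of_injective (fun s : Setoid X => (s : X → X → Prop)) fun _ _ h => Setoid.ext (by simp [h])

/-- The supremum of a monotone family of setoids over `ℝ≥0` is attained. -/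
lemma PD.sup_attained (θ : ℝ≥0 → Setoid X) (hmono : Monotone θ) :
    ∃ T : ℝ≥0, (⨆ t, θ t) = θ T := by
  obtain ⟨m, ⟨T, rfl⟩, hmax⟩ := Set.Finite.exists_maximalFor id (Set.range θ)
    (Set.toFinite _) ⟨θ 0, Set.mem_range_self 0⟩
  refine ⟨T, le_antisymm (iSup_le fun s => ?_) (le_iSup θ T)⟩
  rcases le_total s T with h | h
  · exact hmono h
  · exact hmax (Set.mem_range_self s) (hmono h)

lemma PD.merge_attained (θ : ℝ≥0 → Setoid X) (hmono : Monotone θ)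
    (hD1 : ∀ t : ℝ≥0, ∃ δ : ℝ≥0, 0 < δ ∧ θ t = θ (t + δ))
    {x y : X} (h : (⨆ t, θ t) x y) :
    (θ (sInf {t : ℝ≥0 | (θ t) x y})) x y := by
  obtain ⟨T, hT⟩ := PD.sup_attained θ hmono
  have hTmem : T ∈ {t : ℝ≥0 | (θ t) x y} := by rw [Set.mem_setOf_eq, ← hT]; exact h
  set S := {t : ℝ≥0 | (θ t) x y} with hS
  obtain ⟨δ, hδ, hθδ⟩ := hD1 (sInf S)
  have hlt : sInf S < sInf S + δ := lt_add_of_pos_right _ hδ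
  obtain ⟨s, hsS, hs⟩ := exists_lt_of_csInf_lt ⟨T, hTmem⟩ hlt
  have : θ s ≤ θ (sInf S) := hθδ ▸ hmono hs.le
  exact Setoid.le_def.mp this hsS

lemma PD.merge_le_diam (θ : ℝ≥0 → Setoid X) (hmono : Monotone θ)
    {x y : X} (h : (⨆ t, θ t) x y) :
    sInf {t : ℝ≥0 | (θ t) x y} ≤ diamPD θ := by
  obtain ⟨T, hT⟩ := PD.sup_attained θ hmono
  refine le_csInf ⟨T, hT.symm⟩ fun b hb => ?_
  have : (θ b) x y := by rw [Set.mem_setOf_eq] at hb; rw [hb]; exact h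
  exact csInf_le (OrderBot.bddBelow _) this

end Aux

/-- For `ε > 0` the ultrametric completion `U_ε` is injective on
partial dendrograms whose maximal partition is not the one-block partition (as is
the case for partial dendrograms over a strict poset with nonempty order relation). -/
theorem Ueps_injective {X : Type*} [Finite X] [Nonempty X]
    (θ θ' : ℝ≥0 → Setoid X)
    (hmono : Monotone θ) (hmono' : Monotone θ')
    (hD1 : ∀ t : ℝ≥0, ∃ δ : ℝ≥0, 0 < δ ∧ θ t = θ (t + δ))
    (hD1' : ∀ t : ℝ≥0, ∃ δ : ℝ≥0, 0 < δ ∧ θ' t = θ' (t + δ))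
    (hD3 : θ 0 = ⊥) (hD3' : θ' 0 = ⊥)
    (hne : (⨆ t, θ t) ≠ (⊤ : Setoid X))
    (hne' : (⨆ t, θ' t) ≠ (⊤ : Setoid X))
    (ε : ℝ≥0) (hε : 0 < ε)
    (heq : ∀ x y : X, Ueps θ ε x y = Ueps θ' ε x y) :
    θ = θ' := by
  -- pairs unrelated at infinity
  obtain ⟨x0, y0, h0⟩ : ∃ x y : X, ¬ (⨆ t, θ t) x y := by
    by_contra h; push_neg at h
    exact hne (Setoid.eq_top_iff.mpr h)
  obtain ⟨x1, y1, h1⟩ : ∃ x y : X, ¬ (⨆ t, θ' t) x y := by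
    by_contra h; push_neg at h
    exact hne' (Setoid.eq_top_iff.mpr h)
  -- diameters coincide
  have hdiam : diamPD θ = diamPD θ' := by
    by_cases h0' : (⨆ t, θ' t) x0 y0
    · by_cases h1' : (⨆ t, θ t) x1 y1
      · exfalso
        have e0 := heq x0 y0
        rw [Ueps, Ueps, if_neg h0, if_pos h0'] at e0
        have l0 : diamPD θ + ε ≤ diamPD θ' := e0 ▸ PD.merge_le_diam θ' hmono' h0'
        have e1 := heq x1 y1
        rw [Ueps, Ueps, if_pos h1', if_neg h1] at e1
        have l1 : diamPD θ' + ε ≤ diamPD θ := e1 ▸ PD.merge_le_diam θ hmono h1'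
        have : diamPD θ + ε ≤ diamPD θ := le_trans (le_add_right le_rfl) (le_trans (add_le_add_left l0 ε) l1)
        exact absurd this (not_le.mpr (lt_add_of_pos_right _ hε))
      · have e1 := heq x1 y1
        rw [Ueps, Ueps, if_neg h1', if_neg h1] at e1
        exact add_right_cancel e1
    · have e0 := heq x0 y0
      rw [Ueps, Ueps, if_neg h0, if_neg h0'] at e0
      exact add_right_cancel e0
  -- relatedness at infinity coincides
  have hrel : ∀ x y : X, (⨆ t, θ t) x y ↔ (⨆ t, θ' t) x y := by
    intro x y
    constructor
    · intro h
      by_contra h'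
      have e := heq x y
      rw [Ueps, Ueps, if_pos h, if_neg h'] at e
      have : diamPD θ' + ε ≤ diamPD θ := e ▸ PD.merge_le_diam θ hmono h
      rw [hdiam] at this
      exact absurd this (not_le.mpr (lt_add_of_pos_right _ hε))
    · intro h
      by_contra h'
      have e := heq x y
      rw [Ueps, Ueps, if_neg h', if_pos h] at e
      have : diamPD θ + ε ≤ diamPD θ' := e.symm ▸ PD.merge_le_diam θ' hmono' h
      rw [hdiam] at this
      exact absurd this (not_le.mpr (lt_add_of_pos_right _ hε))
  -- conclude pointwise equality
  funext t
  apply Setoid.ext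
  intro x y
  constructor
  · intro h
    have hsup : (⨆ t, θ t) x y := Setoid.le_def.mp (le_iSup θ t) h
    have hsup' : (⨆ t, θ' t) x y := (hrel x y).mp hsup
    have e := heq x y
    rw [Ueps, Ueps, if_pos hsup, if_pos hsup'] at e
    have hle : sInf {s : ℝ≥0 | (θ' s) x y} ≤ t := by
      rw [← e]; exact csInf_le (OrderBot.bddBelow _) h
    exact Setoid.le_def.mp (hmono' hle) (PD.merge_attained θ' hmono' hD1' hsup')
  · intro h
    have hsup' : (⨆ t, θ' t) x y := Setoid.le_def.mp (le_iSup θ' t) h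
    have hsup : (⨆ t, θ t) x y := (hrel x y).mpr hsup'
    have e := heq x y
    rw [Ueps, Ueps, if_pos hsup, if_pos hsup'] at e
    have hle : sInf {s : ℝ≥0 | (θ s) x y} ≤ t := by
      rw [e]; exact csInf_le (OrderBot.bddBelow _) h
    exact Setoid.le_def.mp (hmono hle) (PD.merge_attained θ hmono hD1 hsup)
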